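/- arXiv:0804.2730 — 2 statements merged into one kernel-verified Lean document; each statement's English description precedes it below -/
import Mathlib

section
/- Simplicity of the principal eigenvalue: if φ and ψ are twice continuously differentiable functions on ℝ^N with φ(x) > 0 and ψ(x) > 0 for all x, with φ, ψ, |∇φ|, |∇ψ|, √V·φ, √V·ψ square-integrable, and both satisfy the same eigenvalue equation −½Δφ + Vφ = λφ and −½Δψ + Vψ = λψ pointwise on ℝ^N, then there is a constant c > 0 with ψ = c·φ. -/
open MeasureTheory Filter Topology

/-- The Laplacian of a function `u : ℝ^N → ℝ`, as the sum of the second partial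
derivatives along the standard basis directions. -/
noncomputable def laplacian {N : ℕ} (u : EuclideanSpace ℝ (Fin N) → ℝ)
    (x : EuclideanSpace ℝ (Fin N)) : ℝ :=
  ∑ i : Fin N, fderiv ℝ (fderiv ℝ u) x (EuclideanSpace.single i 1) (EuclideanSpace.single i 1)

/-- `u` is an eigenfunction of `-½Δ + V` on `ℝ^N` with eigenvalue `lam`: `u` is twice
continuously differentiable, with `u`, `|∇u|` and `√V · u` square-integrable, and satisfies
`-½Δu + V u = lam u` pointwise. -/
def IsEigenfunction {N : ℕ} (V : EuclideanSpace ℝ (Fin N) → ℝ) (lam : ℝ)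
    (u : EuclideanSpace ℝ (Fin N) → ℝ) : Prop :=
  ContDiff ℝ 2 u ∧
  MemLp u 2 volume ∧ MemLp (fun x => ‖gradient u x‖) 2 volume ∧
  MemLp (fun x => Real.sqrt (V x) * u x) 2 volume ∧
  ∀ x, -(1 / 2 : ℝ) * laplacian u x + V x * u x = lam * u x


section Aux


lemma aux_transition_deriv_bound :
    ∃ K : ℝ, 0 ≤ K ∧ ∀ t : ℝ, |deriv Real.smoothTransition t| ≤ K := by
  have hcont : Continuous (deriv Real.smoothTransition) :=
    (Real.smoothTransition.contDiff (n := 1)).continuous_deriv le_rfl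
  obtain ⟨K0, hK0⟩ := (isCompact_Icc (a := (0:ℝ)) (b := 1)).exists_bound_of_continuousOn
    (hcont.continuousOn (s := Set.Icc 0 1))
  refine ⟨max K0 0, le_max_right _ _, fun t => ?_⟩
  rcases le_or_gt t 0 with ht | ht
  · rcases lt_or_eq_of_le ht with ht' | ht'
    · have hz : deriv Real.smoothTransition t = 0 := by
        have hev : Real.smoothTransition =ᶠ[nhds t] (fun _ => 0) := by
          filter_upwards [Iio_mem_nhds ht'] with s hs
          exact Real.smoothTransition.zero_of_nonpos (le_of_lt hs)
        rw [hev.deriv_eq, deriv_const]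
      simp [hz, le_max_right]
    · subst ht'
      have := hK0 0 (by constructor <;> norm_num)
      calc |deriv Real.smoothTransition 0| ≤ K0 := by simpa using this
        _ ≤ max K0 0 := le_max_left _ _
  · rcases le_or_gt t 1 with ht1 | ht1
    · have := hK0 t ⟨le_of_lt ht, ht1⟩
      calc |deriv Real.smoothTransition t| ≤ K0 := by simpa using this
        _ ≤ max K0 0 := le_max_left _ _
    · have hz : deriv Real.smoothTransition t = 0 := by
        have hev : Real.smoothTransition =ᶠ[nhds t] (fun _ => 1) := by
          filter_upwards [Ioi_mem_nhds ht1] with s hs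
          exact Real.smoothTransition.one_of_one_le (le_of_lt hs)
        rw [hev.deriv_eq, deriv_const]
      simp [hz, le_max_right]


variable {N : ℕ}
local notation "E" => EuclideanSpace ℝ (Fin N)

/-- second derivative in direction, as fderiv of directional derivative -/
lemma aux_fderiv_fderiv_apply {u : E → ℝ} (hu : ContDiff ℝ 2 u) (x v w : E) :
    fderiv ℝ (fun y => fderiv ℝ u y v) x w = fderiv ℝ (fderiv ℝ u) x w v := by
  have h1 : DifferentiableAt ℝ (fderiv ℝ u) x :=
    ((hu.fderiv_right (by norm_num : (1:WithTop ℕ∞) + 1 ≤ 2)).differentiable one_ne_zero) x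
  have h2 : HasFDerivAt (fun y => (ContinuousLinearMap.apply ℝ ℝ v) (fderiv ℝ u y))
      ((ContinuousLinearMap.apply ℝ ℝ v).comp (fderiv ℝ (fderiv ℝ u) x)) x :=
    ((ContinuousLinearMap.apply ℝ ℝ v).hasFDerivAt).comp x h1.hasFDerivAt
  have := h2.fderiv
  simp only [ContinuousLinearMap.apply_apply] at this
  rw [this]
  rfl

lemma aux_pd_contDiff {u : E → ℝ} (hu : ContDiff ℝ 2 u) (v : E) :
    ContDiff ℝ 1 (fun x => fderiv ℝ u x v) :=
  ((ContinuousLinearMap.apply ℝ ℝ v).contDiff).comp (hu.fderiv_right (by norm_num : (1:WithTop ℕ∞) + 1 ≤ 2))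

lemma aux_G_contDiff {u v : E → ℝ} (hu : ContDiff ℝ 2 u) (hv : ContDiff ℝ 2 v) (i : Fin N) :
    ContDiff ℝ 1 (fun x => u x * fderiv ℝ v x (EuclideanSpace.single i 1)
      - v x * fderiv ℝ u x (EuclideanSpace.single i 1)) :=
  ((hu.of_le one_le_two).mul (aux_pd_contDiff hv _)).sub
    ((hv.of_le one_le_two).mul (aux_pd_contDiff hu _))

lemma aux_fderiv_mul_pd {u v : E → ℝ} (hu : ContDiff ℝ 2 u) (hv : ContDiff ℝ 2 v)
    (x : E) (i : Fin N) :
    fderiv ℝ (fun y => u y * fderiv ℝ v y (EuclideanSpace.single i 1)) x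
        (EuclideanSpace.single i 1)
      = u x * fderiv ℝ (fderiv ℝ v) x (EuclideanSpace.single i 1) (EuclideanSpace.single i 1)
        + fderiv ℝ v x (EuclideanSpace.single i 1) * fderiv ℝ u x (EuclideanSpace.single i 1) := by
  set e := EuclideanSpace.single i (1:ℝ)
  have hud : DifferentiableAt ℝ u x := (hu.differentiable two_ne_zero) x
  have hpd : DifferentiableAt ℝ (fun y => fderiv ℝ v y e) x :=
    ((aux_pd_contDiff hv e).differentiable one_ne_zero) x
  have := fderiv_fun_mul hud hpd
  have h2 : fderiv ℝ (fun y => u y * fderiv ℝ v y e) x e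
      = u x * fderiv ℝ (fun y => fderiv ℝ v y e) x e + fderiv ℝ v x e * fderiv ℝ u x e := by
    rw [this]; simp
  rw [h2, aux_fderiv_fderiv_apply hv]

lemma aux_div_free {V φ ψ : E → ℝ} {lam : ℝ}
    (hφ : ContDiff ℝ 2 φ) (hψ : ContDiff ℝ 2 ψ)
    (heφ : ∀ x, -(1 / 2 : ℝ) * laplacian φ x + V x * φ x = lam * φ x)
    (heψ : ∀ x, -(1 / 2 : ℝ) * laplacian ψ x + V x * ψ x = lam * ψ x) (x : E) :
    ∑ i : Fin N, fderiv ℝ (fun y => φ y * fderiv ℝ ψ y (EuclideanSpace.single i 1)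
      - ψ y * fderiv ℝ φ y (EuclideanSpace.single i 1)) x (EuclideanSpace.single i 1) = 0 := by
  have hsum : ∀ i : Fin N, fderiv ℝ (fun y => φ y * fderiv ℝ ψ y (EuclideanSpace.single i 1)
      - ψ y * fderiv ℝ φ y (EuclideanSpace.single i 1)) x (EuclideanSpace.single i 1)
      = φ x * fderiv ℝ (fderiv ℝ ψ) x (EuclideanSpace.single i 1) (EuclideanSpace.single i 1)
        - ψ x * fderiv ℝ (fderiv ℝ φ) x (EuclideanSpace.single i 1)
          (EuclideanSpace.single i 1) := by
    intro i
    set e := EuclideanSpace.single i (1:ℝ)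
    have d1 : DifferentiableAt ℝ (fun y => φ y * fderiv ℝ ψ y e) x :=
      (((hφ.of_le one_le_two).mul (aux_pd_contDiff hψ e)).differentiable one_ne_zero) x
    have d2 : DifferentiableAt ℝ (fun y => ψ y * fderiv ℝ φ y e) x :=
      (((hψ.of_le one_le_two).mul (aux_pd_contDiff hφ e)).differentiable one_ne_zero) x
    rw [fderiv_fun_sub d1 d2]
    simp only [ContinuousLinearMap.coe_sub', Pi.sub_apply]
    rw [aux_fderiv_mul_pd hφ hψ x i, aux_fderiv_mul_pd hψ hφ x i]
    ring
  rw [Finset.sum_congr rfl (fun i _ => hsum i)]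
  rw [Finset.sum_sub_distrib, ← Finset.mul_sum, ← Finset.mul_sum]
  have hΔψ : laplacian ψ x = 2 * (V x * ψ x - lam * ψ x) := by
    have := heψ x; unfold laplacian at *; linarith
  have hΔφ : laplacian φ x = 2 * (V x * φ x - lam * φ x) := by
    have := heφ x; unfold laplacian at *; linarith
  unfold laplacian at hΔψ hΔφ
  rw [hΔψ, hΔφ]; ring



lemma aux_cutoff : ∃ K : ℝ, 0 ≤ K ∧ ∀ R : ℝ, 1 ≤ R → ∃ χ : E → ℝ,
    ContDiff ℝ 1 χ ∧ HasCompactSupport χ ∧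
    (∀ x, 0 ≤ χ x ∧ χ x ≤ 1) ∧ (∀ x : E, ‖x‖ ≤ R → χ x = 1) ∧
    (∀ x, ‖fderiv ℝ χ x‖ ≤ K) ∧ (∀ x : E, ‖x‖ < R → fderiv ℝ χ x = 0) := by
  classical
  obtain ⟨K0, hK0, hK0b⟩ := aux_transition_deriv_bound
  refine ⟨4 * K0, by positivity, fun R hR => ?_⟩
  have hR0 : (0:ℝ) < R := lt_of_lt_of_le one_pos hR
  have hR2 : (0:ℝ) < R ^ 2 := by positivity
  set T := Real.smoothTransition with hT
  set a : E → ℝ := fun x => (2 * R ^ 2 - ‖x‖ ^ 2) / R ^ 2 with ha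
  set χ : E → ℝ := fun x => T (a x) with hχ
  have hacd : ContDiff ℝ 1 a := by
    apply ContDiff.div_const
    exact contDiff_const.sub (contDiff_norm_sq ℝ)
  have hχcd : ContDiff ℝ 1 χ := (Real.smoothTransition.contDiff).comp hacd
  have hfd : ∀ x : E, HasFDerivAt χ
      ((deriv T (a x)) • ((-(R ^ 2)⁻¹ : ℝ) • (2 • innerSL ℝ x))) x := by
    intro x
    have h1 : HasFDerivAt (fun y : E => ‖y‖ ^ 2) (2 • innerSL ℝ x) x :=
      (hasStrictFDerivAt_norm_sq x).hasFDerivAt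
    have h2 : HasFDerivAt a ((-(R ^ 2)⁻¹ : ℝ) • (2 • innerSL ℝ x)) x := by
      have ha' : a = fun y : E => (R ^ 2)⁻¹ * (2 * R ^ 2 - ‖y‖ ^ 2) := by
        funext y; rw [ha]; ring
      rw [ha']
      have := ((hasFDerivAt_const (2 * R ^ 2) x).sub h1).const_mul ((R ^ 2)⁻¹)
      refine this.congr_fderiv ?_
      rw [zero_sub, smul_neg, neg_smul]
    have h3 : HasDerivAt T (deriv T (a x)) (a x) :=
      ((Real.smoothTransition.contDiff (n := 1)).differentiable (by norm_num) (a x)).hasDerivAt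
    exact h3.comp_hasFDerivAt x h2
  have hnorm : ∀ x : E, ‖fderiv ℝ χ x‖ = |deriv T (a x)| * (R ^ 2)⁻¹ * (2 * ‖x‖) := by
    intro x
    rw [(hfd x).fderiv]
    have h2s : (2 • innerSL ℝ x : E →L[ℝ] ℝ) = (2:ℝ) • innerSL ℝ x := by
      rw [← Nat.cast_smul_eq_nsmul ℝ]; norm_num
    rw [h2s, norm_smul, norm_smul, norm_smul]
    simp [Real.norm_eq_abs, innerSL_apply_norm, abs_of_pos hR2]
    ring
  refine ⟨χ, hχcd, ?_, ?_, ?_, ?_, ?_⟩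
  · -- compact support
    apply HasCompactSupport.intro (isCompact_closedBall (0:E) (2*R))
    intro x hx
    simp only [Metric.mem_closedBall, dist_zero_right, not_le] at hx
    have : a x ≤ 0 := by
      apply div_nonpos_of_nonpos_of_nonneg _ (le_of_lt hR2)
      nlinarith
    exact Real.smoothTransition.zero_of_nonpos this
  · exact fun x => ⟨Real.smoothTransition.nonneg _, Real.smoothTransition.le_one _⟩
  · intro x hx
    apply Real.smoothTransition.one_of_one_le
    rw [ha, le_div_iff₀ hR2]
    nlinarith [norm_nonneg x]
  · intro x
    rcases le_or_gt (‖x‖ ^ 2) (2 * R ^ 2) with h | h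
    · rw [hnorm x]
      have hx2R : ‖x‖ ≤ 2 * R := by nlinarith [norm_nonneg x]
      have h1 : |deriv T (a x)| * (R ^ 2)⁻¹ * (2 * ‖x‖) ≤ K0 * (R ^ 2)⁻¹ * (2 * (2 * R)) := by
        apply mul_le_mul _ (by linarith) (by positivity)
        · positivity
        · apply mul_le_mul (hK0b _) le_rfl (by positivity) hK0
      have h2 : K0 * (R ^ 2)⁻¹ * (2 * (2 * R)) = 4 * K0 / R := by field_simp; ring
      have h3 : 4 * K0 / R ≤ 4 * K0 := by
        apply div_le_self (by positivity) hR
      linarith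
    · have hz : fderiv ℝ χ x = 0 := by
        have hev : χ =ᶠ[nhds x] (fun _ => 0) := by
          have hopen : IsOpen {y : E | 2 * R ^ 2 < ‖y‖ ^ 2} :=
            isOpen_lt continuous_const (continuous_norm.pow 2)
        
          filter_upwards [hopen.mem_nhds h] with y hy
          apply Real.smoothTransition.zero_of_nonpos
          apply div_nonpos_of_nonpos_of_nonneg _ (le_of_lt hR2)
          have hy' : 2 * R ^ 2 < ‖y‖ ^ 2 := hy
          linarith
        rw [hev.fderiv_eq]; exact fderiv_const_apply _
      rw [hz, norm_zero]; positivity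
  · intro x hx
    have hev : χ =ᶠ[nhds x] (fun _ => 1) := by
      filter_upwards [Metric.ball_mem_nhds x (show (0:ℝ) < R - ‖x‖ by linarith)] with y hy
      apply Real.smoothTransition.one_of_one_le
      rw [ha, le_div_iff₀ hR2]
      have : ‖y‖ < R := by
        have := norm_sub_norm_le y x
        rw [Metric.mem_ball, dist_eq_norm] at hy
        linarith [norm_sub_norm_le y x, hy]
      nlinarith [norm_nonneg y]
    rw [hev.fderiv_eq]; exact fderiv_const_apply _

lemma aux_wpd {φ ψ : E → ℝ} (hφc : ContDiff ℝ 2 φ) (hψc : ContDiff ℝ 2 ψ)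
    (hφne : ∀ x, φ x ≠ 0) (x v : E) :
    fderiv ℝ (fun y => ψ y / φ y) x v
      = (φ x * fderiv ℝ ψ x v - ψ x * fderiv ℝ φ x v) / (φ x) ^ 2 := by
  have hwd : Differentiable ℝ (fun y => ψ y / φ y) :=
    ((hψc.of_le one_le_two).div (hφc.of_le one_le_two) hφne).differentiable one_ne_zero
  have hψeq : ψ = fun y => (ψ y / φ y) * φ y := funext fun y =>
    (div_mul_cancel₀ (ψ y) (hφne y)).symm
  have h1 : fderiv ℝ ψ x v = ψ x / φ x * fderiv ℝ φ x v
      + φ x * fderiv ℝ (fun y => ψ y / φ y) x v := by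
    conv_lhs => rw [hψeq]
    rw [fderiv_fun_mul (hwd x) (hφc.differentiable two_ne_zero x)]
    simp only [ContinuousLinearMap.add_apply, ContinuousLinearMap.coe_smul', Pi.smul_apply,
      smul_eq_mul]
  have hne := hφne x
  field_simp at h1 ⊢
  linarith [h1]

lemma aux_key {V φ ψ : E → ℝ} {lam : ℝ}
    (hφpos : ∀ x, 0 < φ x)
    (hφc : ContDiff ℝ 2 φ) (hψc : ContDiff ℝ 2 ψ)
    (heφ : ∀ x, -(1 / 2 : ℝ) * laplacian φ x + V x * φ x = lam * φ x)
    (heψ : ∀ x, -(1 / 2 : ℝ) * laplacian ψ x + V x * ψ x = lam * ψ x)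
    {χ : E → ℝ} (hχcd : ContDiff ℝ 1 χ) (hχcs : HasCompactSupport χ) :
    Integrable (fun x => ∑ i : Fin N, (χ x * (φ x * fderiv ℝ ψ x (EuclideanSpace.single i 1)
        - ψ x * fderiv ℝ φ x (EuclideanSpace.single i 1)) / φ x) ^ 2) volume ∧
    Integrable (fun x => ∑ i : Fin N,
        (ψ x * fderiv ℝ χ x (EuclideanSpace.single i 1)) ^ 2) volume ∧
    ∫ x, ∑ i : Fin N, (χ x * (φ x * fderiv ℝ ψ x (EuclideanSpace.single i 1)
        - ψ x * fderiv ℝ φ x (EuclideanSpace.single i 1)) / φ x) ^ 2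
      ≤ 4 * ∫ x, ∑ i : Fin N, (ψ x * fderiv ℝ χ x (EuclideanSpace.single i 1)) ^ 2 := by
  classical
  set e : Fin N → E := fun i => EuclideanSpace.single i (1:ℝ) with he
  have hφne : ∀ x, φ x ≠ 0 := fun x => (hφpos x).ne'
  set G : Fin N → E → ℝ := fun i x => φ x * fderiv ℝ ψ x (e i) - ψ x * fderiv ℝ φ x (e i)
    with hG
  set w : E → ℝ := fun x => ψ x / φ x with hw
  set f : E → ℝ := fun x => χ x * χ x * w x with hf
  -- differentiability / continuity
  have hwcd : ContDiff ℝ 1 w := (hψc.of_le one_le_two).div (hφc.of_le one_le_two) hφne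
  have hχd : Differentiable ℝ χ := hχcd.differentiable one_ne_zero
  have hwd : Differentiable ℝ w := hwcd.differentiable one_ne_zero
  have hGcd : ∀ i, ContDiff ℝ 1 (G i) := fun i =>
    ((hφc.of_le one_le_two).mul (aux_pd_contDiff hψc (e i))).sub
      ((hψc.of_le one_le_two).mul (aux_pd_contDiff hφc (e i)))
  have hfcd : ContDiff ℝ 1 f := (hχcd.mul hχcd).mul hwcd
  have hfd : Differentiable ℝ f := hfcd.differentiable one_ne_zero
  have contPD : ∀ (u : E → ℝ), ContDiff ℝ 1 u → ∀ v : E,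
      Continuous fun x => fderiv ℝ u x v := fun u hu v =>
    (ContinuousLinearMap.apply ℝ ℝ v).continuous.comp (hu.continuous_fderiv one_ne_zero)
  -- compact supports
  have hfcs : HasCompactSupport f :=
    HasCompactSupport.intro hχcs fun x hx => by
      simp [hf, image_eq_zero_of_notMem_tsupport hx]
  have hfpdcs : ∀ v : E, HasCompactSupport fun x => fderiv ℝ f x v := fun v =>
    hfcs.fderiv_apply ℝ v
  -- integrability of IBP triple
  have int1 : ∀ i, Integrable (fun x => fderiv ℝ f x (e i) * G i x) volume := fun i =>
    Continuous.integrable_of_hasCompactSupport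
      ((contPD f hfcd (e i)).mul (hGcd i).continuous)
      ((hfpdcs (e i)).mul_right)
  have int2 : ∀ i, Integrable (fun x => f x * fderiv ℝ (G i) x (e i)) volume := fun i =>
    Continuous.integrable_of_hasCompactSupport
      (hfcd.continuous.mul (contPD (G i) (hGcd i) (e i)))
      (hfcs.mul_right)
  have int3 : ∀ i, Integrable (fun x => f x * G i x) volume := fun i =>
    Continuous.integrable_of_hasCompactSupport
      (hfcd.continuous.mul (hGcd i).continuous)
      (hfcs.mul_right)
  have hibp : ∀ i, ∫ x, f x * fderiv ℝ (G i) x (e i)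
      = - ∫ x, fderiv ℝ f x (e i) * G i x := fun i =>
    integral_mul_fderiv_eq_neg_fderiv_mul_of_integrable (int1 i) (int2 i) (int3 i)
      (fun x _ => hfd x) (fun x _ => (hGcd i).differentiable one_ne_zero x)
  -- the divergence-free identity kills the sum of right-hand sides
  have hzero : ∑ i : Fin N, ∫ x, f x * fderiv ℝ (G i) x (e i) = 0 := by
    rw [← integral_finset_sum _ (fun i _ => int2 i)]
    have : (fun x => ∑ i : Fin N, f x * fderiv ℝ (G i) x (e i)) = fun _ => (0:ℝ) := by
      funext x
      rw [← Finset.mul_sum]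
      rw [aux_div_free hφc hψc heφ heψ x, mul_zero]
    rw [this, integral_zero]
  have hsum0 : ∑ i : Fin N, ∫ x, fderiv ℝ f x (e i) * G i x = 0 := by
    have : ∑ i : Fin N, ∫ x, fderiv ℝ f x (e i) * G i x
        = - ∑ i : Fin N, ∫ x, f x * fderiv ℝ (G i) x (e i) := by
      rw [← Finset.sum_neg_distrib]
      exact Finset.sum_congr rfl fun i _ => by rw [hibp i, neg_neg]
    rw [this, hzero, neg_zero]
  -- pointwise derivative computations
  have hwpd : ∀ (x : E) (v : E), fderiv ℝ w x v
      = (φ x * fderiv ℝ ψ x v - ψ x * fderiv ℝ φ x v) / (φ x) ^ 2 := by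
    intro x v
    have hψeq : ψ = fun y => w y * φ y := funext fun y => by
      rw [hw]; exact (div_mul_cancel₀ (ψ y) (hφne y)).symm
    have h1 : fderiv ℝ ψ x v = ψ x / φ x * fderiv ℝ φ x v + φ x * fderiv ℝ w x v := by
      conv_lhs => rw [hψeq]
      rw [fderiv_fun_mul (hwd x) (hφc.differentiable two_ne_zero x)]
      simp only [ContinuousLinearMap.add_apply, ContinuousLinearMap.coe_smul', Pi.smul_apply,
        smul_eq_mul]
      rfl
    have hne := hφne x
    field_simp at h1 ⊢
    linarith [h1]
  have hfpd : ∀ (x : E) (v : E), fderiv ℝ f x v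
      = 2 * χ x * fderiv ℝ χ x v * w x + χ x * χ x * fderiv ℝ w x v := by
    intro x v
    have h1 : fderiv ℝ f x = (χ x * χ x) • fderiv ℝ w x + w x • fderiv ℝ (fun y => χ y * χ y) x :=
      fderiv_mul ((hχd x).mul (hχd x)) (hwd x)
    have h2 : fderiv ℝ (fun y => χ y * χ y) x = χ x • fderiv ℝ χ x + χ x • fderiv ℝ χ x :=
      fderiv_mul (hχd x) (hχd x)
    rw [hf, h1, h2]
    simp only [ContinuousLinearMap.add_apply, ContinuousLinearMap.coe_smul', Pi.smul_apply,
      smul_eq_mul]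
    ring
  -- split into P + Q
  set P : Fin N → E → ℝ := fun i x => (2 * (χ x * G i x / φ x) * ψ x) * fderiv ℝ χ x (e i)
    with hP
  set Q : Fin N → E → ℝ := fun i x => (χ x * G i x / φ x) ^ 2 with hQ
  have hsplit : ∀ i (x : E), fderiv ℝ f x (e i) * G i x = P i x + Q i x := by
    intro i x
    rw [hfpd x (e i), hwpd x (e i), hP, hQ, hw, hG]
    have h := hφne x
    field_simp
  have intP : ∀ i, Integrable (P i) volume := fun i =>
    Continuous.integrable_of_hasCompactSupport
      (Continuous.mul (((continuous_const.mul ((hχcd.continuous.mul (hGcd i).continuous).div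
          hφc.continuous hφne)).mul hψc.continuous))
        (contPD χ hχcd (e i)))
      (HasCompactSupport.intro hχcs fun x hx => by
        simp [hP, image_eq_zero_of_notMem_tsupport hx])
  have intQ : ∀ i, Integrable (Q i) volume := fun i =>
    Continuous.integrable_of_hasCompactSupport
      (((hχcd.continuous.mul (hGcd i).continuous).div hφc.continuous hφne).pow 2)
      (HasCompactSupport.intro hχcs fun x hx => by
        simp [hQ, image_eq_zero_of_notMem_tsupport hx])
  have hQP : ∑ i : Fin N, ∫ x, Q i x = - ∑ i : Fin N, ∫ x, P i x := by
    have h1 : ∀ i, ∫ x, fderiv ℝ f x (e i) * G i x = (∫ x, P i x) + ∫ x, Q i x := by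
      intro i
      rw [show (fun x => fderiv ℝ f x (e i) * G i x) = fun x => P i x + Q i x from
        funext fun x => hsplit i x]
      exact integral_add (intP i) (intQ i)
    have h2 := hsum0
    rw [Finset.sum_congr rfl fun i _ => h1 i, Finset.sum_add_distrib] at h2
    linarith
  -- assemble: A = -∑∫P ≤ ½A + 2B
  set b : E → ℝ := fun x => ∑ i : Fin N, (ψ x * fderiv ℝ χ x (e i)) ^ 2 with hb
  have intb : Integrable b volume :=
    Continuous.integrable_of_hasCompactSupport
      (continuous_finset_sum _ fun i _ => (hψc.continuous.mul (contPD χ hχcd (e i))).pow 2)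
      (HasCompactSupport.intro (hχcs.fderiv ℝ) fun x hx => by
        have : fderiv ℝ χ x = 0 := image_eq_zero_of_notMem_tsupport hx
        simp [hb, this])
  have intQsum : Integrable (fun x => ∑ i : Fin N, Q i x) volume :=
    integrable_finset_sum _ fun i _ => intQ i
  have intPsum : Integrable (fun x => ∑ i : Fin N, P i x) volume :=
    integrable_finset_sum _ fun i _ => intP i
  have hA : ∫ x, ∑ i : Fin N, Q i x = - ∑ i : Fin N, ∫ x, P i x := by
    rw [integral_finset_sum _ fun i _ => intQ i, hQP]
  have hA2 : ∫ x, ∑ i : Fin N, Q i x = ∫ x, - ∑ i : Fin N, P i x := by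
    rw [hA, ← integral_finset_sum _ fun i _ => intP i, ← integral_neg]
  have hpt : ∀ x : E, - ∑ i : Fin N, P i x
      ≤ (1/2) * (∑ i : Fin N, Q i x) + 2 * b x := by
    intro x
    rw [hb, Finset.mul_sum, Finset.mul_sum, ← Finset.sum_add_distrib, ← Finset.sum_neg_distrib]
    apply Finset.sum_le_sum
    intro i _
    set A' := χ x * G i x / φ x
    set B' := ψ x * fderiv ℝ χ x (e i)
    have hPi : P i x = 2 * A' * B' := by rw [hP]; ring
    have hQi : Q i x = A' ^ 2 := by rw [hQ]
    rw [hPi, hQi]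
    nlinarith [sq_nonneg (A' + 2 * B')]
  have hmono : ∫ x, - ∑ i : Fin N, P i x
      ≤ ∫ x, ((1/2) * (∑ i : Fin N, Q i x) + 2 * b x) := by
    apply integral_mono intPsum.neg ((intQsum.const_mul _).add (intb.const_mul _)) hpt
  have hrhs : ∫ x, ((1/2) * (∑ i : Fin N, Q i x) + 2 * b x)
      = (1/2) * (∫ x, ∑ i : Fin N, Q i x) + 2 * ∫ x, b x := by
    rw [integral_add (intQsum.const_mul _) (intb.const_mul _), integral_const_mul,
      integral_const_mul]
  refine ⟨intQsum, intb, ?_⟩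
  rw [hA2]
  have := hmono
  rw [hrhs] at this
  rw [← hA2] at this
  linarith [this]

end Aux

/-- simplicity of the principal eigenvalue: two everywhere-positive
eigenfunctions of `-½Δ + V` with the same eigenvalue `λ` are proportional, `ψ = c·φ`
with `c > 0`. -/
theorem principal_eigenvalue_simple {N : ℕ} (hN : 1 ≤ N)
    (V : EuclideanSpace ℝ (Fin N) → ℝ)
    (hVcont : Continuous V) (hVnonneg : ∀ x, 0 ≤ V x)
    (hVinf : ∀ M : ℝ, ∃ R : ℝ, ∀ x, R ≤ ‖x‖ → M ≤ V x)
    (lam : ℝ) (φ ψ : EuclideanSpace ℝ (Fin N) → ℝ)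
    (hφpos : ∀ x, 0 < φ x) (hψpos : ∀ x, 0 < ψ x)
    (hφ : IsEigenfunction V lam φ) (hψ : IsEigenfunction V lam ψ) :
    ∃ c : ℝ, 0 < c ∧ ψ = fun x => c * φ x := by
  classical
  obtain ⟨hφc, hφL2, -, -, heφ⟩ := hφ
  obtain ⟨hψc, hψL2, -, -, heψ⟩ := hψ
  have hφne : ∀ x, φ x ≠ 0 := fun x => (hφpos x).ne'
  set G : Fin N → EuclideanSpace ℝ (Fin N) → ℝ :=
    fun i x => φ x * fderiv ℝ ψ x (EuclideanSpace.single i 1)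
      - ψ x * fderiv ℝ φ x (EuclideanSpace.single i 1) with hGdef
  set q : EuclideanSpace ℝ (Fin N) → ℝ := fun x => ∑ i : Fin N, (G i x / φ x) ^ 2 with hqdef
  have hGcont : ∀ i, Continuous (G i) := fun i => (aux_G_contDiff hφc hψc i).continuous
  have hqcont : Continuous q :=
    continuous_finset_sum _ fun i _ => ((hGcont i).div hφc.continuous hφne).pow 2
  have hqnn : ∀ x, 0 ≤ q x := fun x => Finset.sum_nonneg fun i _ => sq_nonneg _
  have hψ2 : Integrable (fun x => ψ x ^ 2) volume := hψL2.integrable_sq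
  have hmeas : ∀ n : ℕ, MeasurableSet {y : EuclideanSpace ℝ (Fin N) | (n : ℝ) ≤ ‖y‖} :=
    fun n => (isClosed_le continuous_const continuous_norm).measurableSet
  -- the tail integrals of ψ² tend to 0
  have hI0 : Filter.Tendsto
      (fun n : ℕ => ∫ x in {y : EuclideanSpace ℝ (Fin N) | (n : ℝ) ≤ ‖y‖}, ψ x ^ 2)
      Filter.atTop (nhds 0) := by
    have h := tendsto_integral_of_dominated_convergence (μ := volume)
      (F := fun (n : ℕ) x => Set.indicator {y : EuclideanSpace ℝ (Fin N) | (n : ℝ) ≤ ‖y‖}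
        (fun y => ψ y ^ 2) x)
      (f := fun _ => (0:ℝ)) (bound := fun x => ψ x ^ 2)
      (fun n => (hψ2.aestronglyMeasurable).indicator (hmeas n))
      hψ2
      (fun n => Filter.Eventually.of_forall fun x => by
        show ‖Set.indicator {y : EuclideanSpace ℝ (Fin N) | (n : ℝ) ≤ ‖y‖}
          (fun y => ψ y ^ 2) x‖ ≤ ψ x ^ 2
        rw [Real.norm_eq_abs]
        rcases Set.indicator_eq_zero_or_self {y : EuclideanSpace ℝ (Fin N) | (n : ℝ) ≤ ‖y‖}
          (fun y => ψ y ^ 2) x with h | h <;> rw [h]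
        · simp [sq_nonneg]
        · exact le_of_eq (abs_of_nonneg (sq_nonneg _)))
      (Filter.Eventually.of_forall fun x => by
        apply Filter.Tendsto.congr' _ tendsto_const_nhds
        filter_upwards [Filter.eventually_ge_atTop (⌈‖x‖⌉₊ + 1)] with n hn
        have hxn : x ∉ {y : EuclideanSpace ℝ (Fin N) | (n:ℝ) ≤ ‖y‖} := by
          simp only [Set.mem_setOf_eq, not_le]
          have h1 : ‖x‖ ≤ (⌈‖x‖⌉₊ : ℝ) := Nat.le_ceil _
          have h2 : ((⌈‖x‖⌉₊ + 1 : ℕ) : ℝ) ≤ (n : ℝ) := by exact_mod_cast hn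
          push_cast at h2
          linarith
        exact (Set.indicator_of_notMem hxn _).symm)
    rw [integral_zero] at h
    refine h.congr fun n => ?_
    rw [integral_indicator (hmeas n)]
  -- the key fact: q vanishes identically
  have hq0 : ∀ x, q x = 0 := by
    by_contra hcon
    push_neg at hcon
    obtain ⟨x0, hx0⟩ := hcon
    have hδ : 0 < q x0 := lt_of_le_of_ne (hqnn x0) (Ne.symm hx0)
    obtain ⟨r, hr, hball⟩ : ∃ r > 0, ∀ y ∈ Metric.ball x0 r, q x0 / 2 < q y := by
      have hev : ∀ᶠ y in nhds x0, q x0 / 2 < q y :=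
        (hqcont.continuousAt).eventually (eventually_gt_nhds (half_lt_self hδ))
      obtain ⟨r, hr, h⟩ := Metric.eventually_nhds_iff_ball.1 hev
      exact ⟨r, hr, h⟩
    have hqint : IntegrableOn q (Metric.ball x0 r) volume :=
      (hqcont.continuousOn.integrableOn_compact (isCompact_closedBall x0 r)).mono_set
        Metric.ball_subset_closedBall
    set L := ∫ y in Metric.ball x0 r, q y with hLdef
    have hL : 0 < L := by
      have h1 : q x0 / 2 * (volume (Metric.ball x0 r)).toReal ≤ L :=
        setIntegral_ge_of_const_le_real measurableSet_ball measure_ball_lt_top.ne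
          (fun y hy => le_of_lt (hball y hy)) hqint
      have h2 : 0 < (volume (Metric.ball x0 r)).toReal :=
        ENNReal.toReal_pos (Metric.measure_ball_pos volume x0 hr).ne' measure_ball_lt_top.ne
      nlinarith
    obtain ⟨K, hK0, hcut⟩ := aux_cutoff (N := N)
    have hconv : Filter.Tendsto
        (fun n : ℕ => 4 * ((N:ℝ) * K ^ 2 *
          ∫ x in {y : EuclideanSpace ℝ (Fin N) | (n : ℝ) ≤ ‖y‖}, ψ x ^ 2))
        Filter.atTop (nhds 0) := by
      have := (hI0.const_mul ((N:ℝ) * K ^ 2)).const_mul 4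
      simpa using this
    have hev2 : ∀ᶠ n : ℕ in Filter.atTop,
        4 * ((N:ℝ) * K ^ 2 * ∫ x in {y : EuclideanSpace ℝ (Fin N) | (n : ℝ) ≤ ‖y‖}, ψ x ^ 2)
          < L := hconv.eventually (eventually_lt_nhds hL)
    obtain ⟨n, hn1, hnx, hnlt⟩ : ∃ n : ℕ, (1:ℝ) ≤ (n:ℝ) ∧ ‖x0‖ + r ≤ (n:ℝ) ∧
        4 * ((N:ℝ) * K ^ 2 * ∫ x in {y : EuclideanSpace ℝ (Fin N) | (n : ℝ) ≤ ‖y‖}, ψ x ^ 2)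
          < L := by
      obtain ⟨n, hn⟩ := (hev2.and (Filter.eventually_ge_atTop (max 1 ⌈‖x0‖ + r⌉₊))).exists
      refine ⟨n, ?_, ?_, hn.1⟩
      · have := le_trans (le_max_left 1 ⌈‖x0‖ + r⌉₊) hn.2
        exact_mod_cast Nat.one_le_cast.mpr this
      · have h1 : (⌈‖x0‖ + r⌉₊ : ℝ) ≤ (n : ℝ) := by
          exact_mod_cast le_trans (le_max_right 1 ⌈‖x0‖ + r⌉₊) hn.2
        linarith [Nat.le_ceil (‖x0‖ + r)]
    obtain ⟨χ, hχcd, hχcs, hχ01, hχ1, hχK, hχ0⟩ := hcut (n:ℝ) hn1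
    obtain ⟨intA, intB, hkey⟩ := aux_key hφpos hφc hψc heφ heψ hχcd hχcs
    -- lower bound
    have h1 : L ≤ ∫ x, ∑ i : Fin N, (χ x * G i x / φ x) ^ 2 := by
      have hcongr : L = ∫ y in Metric.ball x0 r, ∑ i : Fin N, (χ y * G i y / φ y) ^ 2 := by
        rw [hLdef]
        refine setIntegral_congr_fun measurableSet_ball fun y hy => ?_
        have hyn : ‖y‖ ≤ (n:ℝ) := by
          rw [Metric.mem_ball, dist_eq_norm] at hy
          calc ‖y‖ = ‖y - x0 + x0‖ := by rw [sub_add_cancel]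
            _ ≤ ‖y - x0‖ + ‖x0‖ := norm_add_le _ _
            _ ≤ ‖x0‖ + r := by linarith
            _ ≤ (n:ℝ) := hnx
        rw [hqdef]
        simp [hχ1 y hyn]
      rw [hcongr]
      exact setIntegral_le_integral intA (Filter.Eventually.of_forall fun x =>
        Finset.sum_nonneg fun i _ => sq_nonneg _)
    -- upper bound
    have h2 : ∫ x, ∑ i : Fin N, (ψ x * fderiv ℝ χ x (EuclideanSpace.single i 1)) ^ 2
        ≤ (N:ℝ) * K ^ 2 * ∫ x in {y : EuclideanSpace ℝ (Fin N) | (n : ℝ) ≤ ‖y‖}, ψ x ^ 2 := by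
      have hpt : ∀ x, ∑ i : Fin N, (ψ x * fderiv ℝ χ x (EuclideanSpace.single i 1)) ^ 2
          ≤ (N:ℝ) * K ^ 2 * Set.indicator {y : EuclideanSpace ℝ (Fin N) | (n : ℝ) ≤ ‖y‖}
            (fun y => ψ y ^ 2) x := by
        intro x
        rcases lt_or_ge ‖x‖ (n:ℝ) with hlt | hge
        · have hz := hχ0 x hlt
          have hind : Set.indicator {y : EuclideanSpace ℝ (Fin N) | (n : ℝ) ≤ ‖y‖}
              (fun y => ψ y ^ 2) x = 0 := Set.indicator_of_notMem (by
                simp only [Set.mem_setOf_eq, not_le]; exact hlt) _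
          rw [hind]
          simp [hz]
        · have hind : Set.indicator {y : EuclideanSpace ℝ (Fin N) | (n : ℝ) ≤ ‖y‖}
              (fun y => ψ y ^ 2) x = ψ x ^ 2 := Set.indicator_of_mem
              (show x ∈ {y : EuclideanSpace ℝ (Fin N) | (n : ℝ) ≤ ‖y‖} from hge) _
          rw [hind]
          have hterm : ∀ i : Fin N,
              (ψ x * fderiv ℝ χ x (EuclideanSpace.single i 1)) ^ 2 ≤ ψ x ^ 2 * K ^ 2 := by
            intro i
            have hb : |fderiv ℝ χ x (EuclideanSpace.single i 1)| ≤ K := by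
              have h1 : ‖fderiv ℝ χ x (EuclideanSpace.single i 1)‖
                  ≤ ‖fderiv ℝ χ x‖ * ‖(EuclideanSpace.single i (1:ℝ) :
                      EuclideanSpace ℝ (Fin N))‖ := ContinuousLinearMap.le_opNorm _ _
              rw [EuclideanSpace.norm_single] at h1
              simp only [norm_one, mul_one] at h1
              calc |fderiv ℝ χ x (EuclideanSpace.single i 1)|
                  ≤ ‖fderiv ℝ χ x‖ := h1
                _ ≤ K := hχK x
            have hd2 : (fderiv ℝ χ x (EuclideanSpace.single i 1)) ^ 2 ≤ K ^ 2 := by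
              have h2 := mul_self_le_mul_self (abs_nonneg
                (fderiv ℝ χ x (EuclideanSpace.single i 1))) hb
              rw [abs_mul_abs_self] at h2
              nlinarith
            calc (ψ x * fderiv ℝ χ x (EuclideanSpace.single i 1)) ^ 2
                = ψ x ^ 2 * (fderiv ℝ χ x (EuclideanSpace.single i 1)) ^ 2 := by ring
              _ ≤ ψ x ^ 2 * K ^ 2 := mul_le_mul_of_nonneg_left hd2 (sq_nonneg _)
          calc ∑ i : Fin N, (ψ x * fderiv ℝ χ x (EuclideanSpace.single i 1)) ^ 2
              ≤ ∑ _i : Fin N, ψ x ^ 2 * K ^ 2 := Finset.sum_le_sum fun i _ => hterm i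
            _ = (N:ℝ) * K ^ 2 * ψ x ^ 2 := by
                rw [Finset.sum_const, Finset.card_univ, Fintype.card_fin, nsmul_eq_mul]
                ring
      calc ∫ x, ∑ i : Fin N, (ψ x * fderiv ℝ χ x (EuclideanSpace.single i 1)) ^ 2
          ≤ ∫ x, (N:ℝ) * K ^ 2 * Set.indicator
              {y : EuclideanSpace ℝ (Fin N) | (n : ℝ) ≤ ‖y‖} (fun y => ψ y ^ 2) x :=
            integral_mono intB (((hψ2.indicator (hmeas n))).const_mul _) hpt
        _ = (N:ℝ) * K ^ 2 * ∫ x in {y : EuclideanSpace ℝ (Fin N) | (n : ℝ) ≤ ‖y‖}, ψ x ^ 2 := by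
            rw [integral_const_mul, integral_indicator (hmeas n)]
    have hfinal : L ≤ 4 * ((N:ℝ) * K ^ 2 *
        ∫ x in {y : EuclideanSpace ℝ (Fin N) | (n : ℝ) ≤ ‖y‖}, ψ x ^ 2) := by
      calc L ≤ ∫ x, ∑ i : Fin N, (χ x * G i x / φ x) ^ 2 := h1
        _ ≤ 4 * ∫ x, ∑ i : Fin N, (ψ x * fderiv ℝ χ x (EuclideanSpace.single i 1)) ^ 2 := hkey
        _ ≤ 4 * ((N:ℝ) * K ^ 2 *
            ∫ x in {y : EuclideanSpace ℝ (Fin N) | (n : ℝ) ≤ ‖y‖}, ψ x ^ 2) := by linarith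
    exact absurd hfinal (not_le.mpr hnlt)
  -- from q ≡ 0, each G i vanishes
  have hG0 : ∀ (i : Fin N) (x : EuclideanSpace ℝ (Fin N)), G i x = 0 := by
    intro i x
    have h := hq0 x
    rw [hqdef] at h
    have := (Finset.sum_eq_zero_iff_of_nonneg (fun j _ => sq_nonneg (G j x / φ x))).1 h i
      (Finset.mem_univ i)
    have h2 : G i x / φ x = 0 := by
      have := sq_eq_zero_iff.1 this
      exact this
    rcases div_eq_zero_iff.1 h2 with h3 | h3
    · exact h3
    · exact absurd h3 (hφne x)
  -- hence ψ/φ is constant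
  set w : EuclideanSpace ℝ (Fin N) → ℝ := fun x => ψ x / φ x with hwdef
  have hwd : Differentiable ℝ w :=
    (((hψc.of_le one_le_two).div (hφc.of_le one_le_two) hφne)).differentiable one_ne_zero
  have hfz : ∀ x, fderiv ℝ w x = 0 := by
    intro x
    ext v
    have hv := (EuclideanSpace.basisFun (Fin N) ℝ).sum_repr v
    have hsum : fderiv ℝ w x v = ∑ i : Fin N,
        (EuclideanSpace.basisFun (Fin N) ℝ).repr v i
          * fderiv ℝ w x (EuclideanSpace.single i 1) := by
      conv_lhs => rw [← hv]
      rw [map_sum]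
      refine Finset.sum_congr rfl fun i _ => ?_
      rw [(fderiv ℝ w x).map_smul, smul_eq_mul, EuclideanSpace.basisFun_apply]
    rw [ContinuousLinearMap.zero_apply, hsum]
    apply Finset.sum_eq_zero
    intro i _
    have hz : fderiv ℝ w x (EuclideanSpace.single i 1) = 0 := by
      rw [hwdef, aux_wpd hφc hψc hφne]
      have := hG0 i x
      rw [hGdef] at this
      simp only at this
      rw [this, zero_div]
    rw [hz, mul_zero]
  have hconst := is_const_of_fderiv_eq_zero (𝕜 := ℝ) hwd hfz
  refine ⟨ψ 0 / φ 0, div_pos (hψpos 0) (hφpos 0), funext fun x => ?_⟩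
  have hx := hconst x 0
  rw [hwdef] at hx
  simp only at hx
  rw [div_eq_div_iff (hφne x) (hφne 0)] at hx
  rw [div_mul_eq_mul_div, eq_div_iff (hφne 0)]
  linarith [hx]
end

section
/- Cutoff value of the chemical potential in the one-dimensional box model: let 0 < a < L and λ > 0, and let u : ℝ → ℝ be continuous on [a, L] and twice differentiable on (a, L), with u(x) > 0 for all x ∈ (a, L), u(L) = 0, and −½u''(x) = λu(x) for all x ∈ (a, L). Then λ ≤ π²/(2(L − a)²). -/
open Real Topology Filter

lemma my_const_of_deriv_zero {f : ℝ → ℝ} {a b : ℝ}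
    (h : ∀ x ∈ Set.Ioo a b, HasDerivAt f 0 x) :
    ∀ x ∈ Set.Ioo a b, ∀ y ∈ Set.Ioo a b, f x = f y := by
  have key : ∀ x ∈ Set.Ioo a b, ∀ y ∈ Set.Ioo a b, x ≤ y → f y = f x := by
    intro x hx y hy hxy
    have hsub : Set.Icc x y ⊆ Set.Ioo a b := fun z hz =>
      ⟨lt_of_lt_of_le hx.1 hz.1, lt_of_le_of_lt hz.2 hy.2⟩
    have hcont : ContinuousOn f (Set.Icc x y) := fun z hz =>
      ((h z (hsub hz)).continuousAt).continuousWithinAt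
    have := constant_of_has_deriv_right_zero hcont (fun z hz =>
      ((h z (hsub (Set.Ico_subset_Icc_self hz))).hasDerivWithinAt))
    exact this y (Set.right_mem_Icc.2 hxy)
  intro x hx y hy
  rcases le_total x y with hxy | hxy
  · exact (key x hx y hy hxy).symm
  · exact key y hy x hx hxy

/-- cutoff value of the chemical potential in the one-dimensional box model:
if `0 < a < L`, `λ > 0`, and `u` is continuous on `[a, L]`, twice differentiable on `(a, L)`,
positive on `(a, L)`, vanishes at `L`, and satisfies `-½u'' = λu` on `(a, L)`, then
`λ ≤ π² / (2 (L - a)²)`. -/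
theorem chemical_potential_cutoff_1d (a L lam : ℝ)
    (ha : 0 < a) (haL : a < L) (hlam : 0 < lam)
    (u : ℝ → ℝ)
    (hucont : ContinuousOn u (Set.Icc a L))
    (hud : ∀ x ∈ Set.Ioo a L, DifferentiableAt ℝ u x)
    (hud2 : ∀ x ∈ Set.Ioo a L, DifferentiableAt ℝ (deriv u) x)
    (hupos : ∀ x ∈ Set.Ioo a L, 0 < u x)
    (huL : u L = 0)
    (heq : ∀ x ∈ Set.Ioo a L, -(1 / 2 : ℝ) * deriv (deriv u) x = lam * u x) :
    lam ≤ π ^ 2 / (2 * (L - a) ^ 2) := by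
  by_contra hcon
  push_neg at hcon
  set k : ℝ := Real.sqrt (2 * lam) with hkdef
  have hk : 0 < k := Real.sqrt_pos.2 (by linarith)
  have hk2 : k ^ 2 = 2 * lam := Real.sq_sqrt (by linarith)
  have hLa : 0 < L - a := by linarith
  have hpik : π < k * (L - a) := by
    have h1 : π ^ 2 < (k * (L - a)) ^ 2 := by
      have := (div_lt_iff₀ (by positivity : (0:ℝ) < 2 * (L - a) ^ 2)).1 hcon
      calc π ^ 2 < lam * (2 * (L - a) ^ 2) := this
        _ = (k * (L - a)) ^ 2 := by rw [mul_pow, hk2]; ring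
    exact lt_of_pow_lt_pow_left₀ 2 (by positivity) h1
  set x₀ : ℝ := L - π / k with hx0def
  have hx0 : x₀ ∈ Set.Ioo a L := by
    constructor
    · have : π / k < L - a := (div_lt_iff₀ hk).2 (by linarith [hpik])
      simp only [hx0def]; linarith
    · have : 0 < π / k := div_pos Real.pi_pos hk
      simp only [hx0def]; linarith
  have hkk : k * k = 2 * lam := by rw [← sq]; exact hk2
  -- second derivative identity
  have hd2 : ∀ x ∈ Set.Ioo a L, deriv (deriv u) x = -(k * k) * u x := by
    intro x hx
    have := heq x hx
    rw [hkk]; linarith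
  -- trig derivative facts
  have hinner : ∀ x : ℝ, HasDerivAt (fun y => k * (L - y)) (-k) x := by
    intro x
    have h1 : HasDerivAt (fun y : ℝ => L - y) (-1) x := by
      simpa using (hasDerivAt_id x).const_sub L
    simpa using h1.const_mul k
  have hsin : ∀ x : ℝ, HasDerivAt (fun y => Real.sin (k * (L - y)))
      (Real.cos (k * (L - x)) * (-k)) x := fun x => (hinner x).sin
  have hcos : ∀ x : ℝ, HasDerivAt (fun y => Real.cos (k * (L - y)))
      (-Real.sin (k * (L - x)) * (-k)) x := fun x => (hinner x).cos
  -- Wronskian-type quantities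
  set F : ℝ → ℝ := fun x => -k * u x * Real.cos (k * (L - x))
      - deriv u x * Real.sin (k * (L - x)) with hFdef
  set G : ℝ → ℝ := fun x => k * u x * Real.sin (k * (L - x))
      - deriv u x * Real.cos (k * (L - x)) with hGdef
  have hF : ∀ x ∈ Set.Ioo a L, HasDerivAt F 0 x := by
    intro x hx
    have h1 : HasDerivAt u (deriv u x) x := (hud x hx).hasDerivAt
    have h2 : HasDerivAt (deriv u) (deriv (deriv u) x) x := (hud2 x hx).hasDerivAt
    have := ((h1.const_mul (-k)).mul (hcos x)).sub (h2.mul (hsin x))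
    convert this using 1
    · rfl
    · rfl
    · rfl
    rw [hd2 x hx]; ring
  have hG : ∀ x ∈ Set.Ioo a L, HasDerivAt G 0 x := by
    intro x hx
    have h1 : HasDerivAt u (deriv u x) x := (hud x hx).hasDerivAt
    have h2 : HasDerivAt (deriv u) (deriv (deriv u) x) x := (hud2 x hx).hasDerivAt
    have := ((h1.const_mul k).mul (hsin x)).sub (h2.mul (hcos x))
    convert this using 1
    · rfl
    · rfl
    · rfl
    rw [hd2 x hx]; ring
  have hFconst := my_const_of_deriv_zero hF
  have hGconst := my_const_of_deriv_zero hG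
  -- key identity: k * u x = G x₀ * sin (k (L - x)) - F x₀ * cos (k (L - x))
  have hkey : ∀ x ∈ Set.Ioo a L,
      k * u x = G x₀ * Real.sin (k * (L - x)) - F x₀ * Real.cos (k * (L - x)) := by
    intro x hx
    have hFx : F x = F x₀ := hFconst x hx x₀ hx0
    have hGx : G x = G x₀ := hGconst x hx x₀ hx0
    rw [← hFx, ← hGx]
    have hpyth := Real.sin_sq_add_cos_sq (k * (L - x))
    simp only [hFdef, hGdef]
    linear_combination (-(k * u x)) * hpyth
  -- take limit x → L to get F x₀ = 0
  have hFx0 : F x₀ = 0 := by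
    have hne : (𝓝[Set.Ioo a L] L).NeBot := right_nhdsWithin_Ioo_neBot haL
    have h1 : Filter.Tendsto (fun x => k * u x) (𝓝[Set.Ioo a L] L) (𝓝 (k * u L)) := by
      have : ContinuousWithinAt u (Set.Icc a L) L :=
        hucont L (Set.right_mem_Icc.2 (le_of_lt haL))
      exact ((this.mono Set.Ioo_subset_Icc_self).const_smul k).tendsto
    have hin : Continuous (fun x : ℝ => k * (L - x)) :=
      continuous_const.mul (continuous_const.sub continuous_id)
    have h2 : Filter.Tendsto
        (fun x => G x₀ * Real.sin (k * (L - x)) - F x₀ * Real.cos (k * (L - x)))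
        (𝓝[Set.Ioo a L] L)
        (𝓝 (G x₀ * Real.sin (k * (L - L)) - F x₀ * Real.cos (k * (L - L)))) := by
      apply Filter.Tendsto.mono_left _ nhdsWithin_le_nhds
      exact ((continuous_const.mul (Real.continuous_sin.comp hin)).sub
        (continuous_const.mul (Real.continuous_cos.comp hin))).tendsto L
    have heqf : (fun x => k * u x) =ᶠ[𝓝[Set.Ioo a L] L]
        (fun x => G x₀ * Real.sin (k * (L - x)) - F x₀ * Real.cos (k * (L - x))) := by
      filter_upwards [self_mem_nhdsWithin] with x hx
      exact hkey x hx
    have hthis := tendsto_nhds_unique (h1.congr' heqf) h2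
    have harg0 : k * (L - L) = 0 := by ring
    rw [harg0, Real.sin_zero, Real.cos_zero, huL] at hthis
    simp at hthis
    linarith
  -- evaluate at x₀ : contradiction with positivity
  have harg : k * (L - x₀) = π := by
    simp only [hx0def]
    field_simp
    ring
  have := hkey x₀ hx0
  rw [harg, Real.sin_pi, hFx0] at this
  simp at this
  have hpos := hupos x₀ hx0
  rcases this with h | h
  · linarith
  · linarith
end
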